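/- Let Ω' ⊂ ℝ^d be open and bounded, μ' a finite nonnegative measure on Ω', and γ > 0. Define Ψ(v;γ) = (2πγ²)^{−1/2} ∫_{−∞}^v exp(−t²/(2γ²)) dt. If v ∈ L²(μ') then the function x ↦ log Ψ(v(x);γ) belongs to L¹(μ'). -/

import Mathlib

open Real MeasureTheory

/-- The CDF of a centered Gaussian with standard deviation `γ`. -/
noncomputable def gaussCDF (γ v : ℝ) : ℝ :=
  (Real.sqrt (2 * Real.pi * γ ^ 2))⁻¹ * ∫ t in Set.Iic v, Real.exp (-t ^ 2 / (2 * γ ^ 2))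

section aux

variable {γ : ℝ}

lemma gauss_eq (t : ℝ) :
    Real.exp (-t ^ 2 / (2 * γ ^ 2)) = Real.exp (-(1 / (2 * γ ^ 2)) * t ^ 2) := by
  ring_nf

lemma gauss_integrable (hγ : 0 < γ) :
    Integrable (fun t : ℝ => Real.exp (-t ^ 2 / (2 * γ ^ 2))) := by
  have h := integrable_exp_neg_mul_sq (b := 1 / (2 * γ ^ 2)) (by positivity)
  exact h.congr (by filter_upwards with t using (gauss_eq t).symm)

lemma sqrt_pos' (hγ : 0 < γ) : 0 < Real.sqrt (2 * Real.pi * γ ^ 2) :=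
  Real.sqrt_pos.mpr (by positivity)

lemma gaussCDF_le_one (hγ : 0 < γ) (w : ℝ) : gaussCDF γ w ≤ 1 := by
  have hS := sqrt_pos' hγ
  have h1 : ∫ t in Set.Iic w, Real.exp (-t ^ 2 / (2 * γ ^ 2)) ≤
      ∫ t : ℝ, Real.exp (-t ^ 2 / (2 * γ ^ 2)) :=
    setIntegral_le_integral (gauss_integrable hγ)
      (by filter_upwards with t using (Real.exp_pos _).le)
  have h2 : ∫ t : ℝ, Real.exp (-t ^ 2 / (2 * γ ^ 2)) = Real.sqrt (2 * Real.pi * γ ^ 2) := by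
    have h3 := integral_gaussian (1 / (2 * γ ^ 2))
    have h4 : ∫ t : ℝ, Real.exp (-t ^ 2 / (2 * γ ^ 2))
        = ∫ t : ℝ, Real.exp (-(1 / (2 * γ ^ 2)) * t ^ 2) := by
      congr 1; ext t; exact gauss_eq t
    rw [h4, h3]
    congr 1
    field_simp
  rw [gaussCDF, inv_mul_le_iff₀ hS, mul_one, ← h2]
  exact h1

lemma gaussCDF_lower (hγ : 0 < γ) (w : ℝ) :
    (Real.sqrt (2 * Real.pi))⁻¹ * Real.exp (-(|w| + γ) ^ 2 / (2 * γ ^ 2)) ≤ gaussCDF γ w := by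
  have hS := sqrt_pos' hγ
  set c : ℝ := Real.exp (-(|w| + γ) ^ 2 / (2 * γ ^ 2)) with hc
  have hcpos : 0 < c := Real.exp_pos _
  have hstep1 : γ * c ≤ ∫ t in Set.Ioc (w - γ) w, Real.exp (-t ^ 2 / (2 * γ ^ 2)) := by
    have hconst : ∫ _ in Set.Ioc (w - γ) w, c = γ * c := by
      rw [setIntegral_const, measureReal_def, Real.volume_Ioc, smul_eq_mul]
      congr 1
      rw [show w - (w - γ) = γ by ring, ENNReal.toReal_ofReal hγ.le]
    rw [← hconst]
    apply setIntegral_mono_on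
    · exact integrableOn_const (by rw [Real.volume_Ioc]; exact ENNReal.ofReal_ne_top)
    · exact (gauss_integrable hγ).integrableOn
    · exact measurableSet_Ioc
    · intro t ht
      apply Real.exp_le_exp.mpr
      have ht1 := ht.1
      have ht2 := ht.2
      have ha := le_abs_self w
      have hb := neg_le_abs w
      have hsq : t ^ 2 ≤ (|w| + γ) ^ 2 := by nlinarith [abs_nonneg w]
      have hpos : (0 : ℝ) < 2 * γ ^ 2 := by positivity
      exact (div_le_div_iff_of_pos_right hpos).mpr (by linarith)
  have hstep2 : ∫ t in Set.Ioc (w - γ) w, Real.exp (-t ^ 2 / (2 * γ ^ 2)) ≤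
      ∫ t in Set.Iic w, Real.exp (-t ^ 2 / (2 * γ ^ 2)) := by
    apply setIntegral_mono_set (gauss_integrable hγ).integrableOn
      (by filter_upwards with t using (Real.exp_pos _).le)
    exact HasSubset.Subset.eventuallyLE Set.Ioc_subset_Iic_self
  have hSeq : Real.sqrt (2 * Real.pi * γ ^ 2) = Real.sqrt (2 * Real.pi) * γ := by
    rw [Real.sqrt_mul (by positivity), Real.sqrt_sq hγ.le]
  have h2π : 0 < Real.sqrt (2 * Real.pi) := Real.sqrt_pos.mpr (by positivity)
  have : (Real.sqrt (2 * Real.pi * γ ^ 2))⁻¹ * (γ * c) ≤ gaussCDF γ w := by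
    rw [gaussCDF]
    exact mul_le_mul_of_nonneg_left (le_trans hstep1 hstep2) (by positivity)
  calc (Real.sqrt (2 * Real.pi))⁻¹ * c
      = (Real.sqrt (2 * Real.pi * γ ^ 2))⁻¹ * (γ * c) := by
        rw [hSeq]; field_simp
    _ ≤ gaussCDF γ w := this

lemma gaussCDF_pos (hγ : 0 < γ) (w : ℝ) : 0 < gaussCDF γ w :=
  lt_of_lt_of_le (by positivity) (gaussCDF_lower hγ w)

lemma log_gaussCDF_bound (hγ : 0 < γ) (w : ℝ) :
    |Real.log (gaussCDF γ w)| ≤ (Real.log (Real.sqrt (2 * Real.pi)) + 1) + w ^ 2 / γ ^ 2 := by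
  have hpos := gaussCDF_pos hγ w
  have h2π : 0 < Real.sqrt (2 * Real.pi) := Real.sqrt_pos.mpr (by positivity)
  have hlog2π : 0 ≤ Real.log (Real.sqrt (2 * Real.pi)) := by
    apply Real.log_nonneg
    rw [show (1 : ℝ) = Real.sqrt 1 from (Real.sqrt_one).symm]
    exact Real.sqrt_le_sqrt (by nlinarith [Real.pi_gt_three])
  have hub : Real.log (gaussCDF γ w) ≤ 0 :=
    Real.log_nonpos hpos.le (gaussCDF_le_one hγ w)
  have hlb : -(Real.log (Real.sqrt (2 * Real.pi))) + -(|w| + γ) ^ 2 / (2 * γ ^ 2)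
      ≤ Real.log (gaussCDF γ w) := by
    have := Real.log_le_log (by positivity :
      (0:ℝ) < (Real.sqrt (2 * Real.pi))⁻¹ * Real.exp (-(|w| + γ) ^ 2 / (2 * γ ^ 2)))
      (gaussCDF_lower hγ w)
    rwa [Real.log_mul (by positivity) (Real.exp_pos _).ne', Real.log_inv, Real.log_exp] at this
  have hquad : (|w| + γ) ^ 2 / (2 * γ ^ 2) ≤ 1 + w ^ 2 / γ ^ 2 := by
    rw [div_le_iff₀ (by positivity)]
    have hsq : |w| ^ 2 = w ^ 2 := sq_abs w
    have h1 : (|w| - γ) ^ 2 ≥ 0 := sq_nonneg _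
    have h2 : (0:ℝ) < γ ^ 2 := by positivity
    have h3 : w ^ 2 / γ ^ 2 * γ ^ 2 = w ^ 2 := by field_simp
    nlinarith
  have hwnn : 0 ≤ w ^ 2 / γ ^ 2 := by positivity
  rw [abs_le]
  constructor
  · have : -(|w| + γ) ^ 2 / (2 * γ ^ 2) = -((|w| + γ) ^ 2 / (2 * γ ^ 2)) := by ring
    rw [this] at hlb
    linarith
  · linarith

lemma log_gaussCDF_measurable (hγ : 0 < γ) :
    Measurable (fun u => Real.log (gaussCDF γ u)) := by
  have hF : Monotone (fun u : ℝ => ∫ t in Set.Iic u, Real.exp (-t ^ 2 / (2 * γ ^ 2))) := by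
    intro a b hab
    apply setIntegral_mono_set (gauss_integrable hγ).integrableOn
      (by filter_upwards with t using (Real.exp_pos _).le)
    exact HasSubset.Subset.eventuallyLE (Set.Iic_subset_Iic.mpr hab)
  exact Real.measurable_log.comp (measurable_const.mul hF.measurable)

end aux

/-- If `Ω' ⊂ ℝ^d` is open and bounded, `μ'` is a finite nonnegative measure on `Ω'`,
`γ > 0`, and `v ∈ L²(μ')`, then `x ↦ log Ψ(v(x); γ)` belongs to `L¹(μ')`. -/
theorem logPsi_of_L2_integrable
    {d : ℕ} (Ω' : Set (EuclideanSpace ℝ (Fin d)))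
    (hΩ'open : IsOpen Ω') (hΩ'bdd : Bornology.IsBounded Ω')
    (μ' : Measure (EuclideanSpace ℝ (Fin d))) [IsFiniteMeasure μ']
    (hsupp : μ' Ω'ᶜ = 0)
    (γ : ℝ) (hγ : 0 < γ)
    (v : EuclideanSpace ℝ (Fin d) → ℝ)
    (hv : MeasureTheory.MemLp v 2 μ') :
    MeasureTheory.Integrable (fun x => Real.log (gaussCDF γ (v x))) μ' := by
  have hmeas : AEStronglyMeasurable (fun x => Real.log (gaussCDF γ (v x))) μ' :=
    ((log_gaussCDF_measurable hγ).comp_aemeasurable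
      hv.aestronglyMeasurable.aemeasurable).aestronglyMeasurable
  have hg : Integrable
      (fun x => (Real.log (Real.sqrt (2 * Real.pi)) + 1) + (v x) ^ 2 / γ ^ 2) μ' :=
    (integrable_const _).add (hv.integrable_sq.div_const _)
  apply hg.mono hmeas
  filter_upwards with x
  rw [Real.norm_eq_abs, Real.norm_eq_abs]
  exact (log_gaussCDF_bound hγ (v x)).trans (le_abs_self _)
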